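/- The map h_ν(θ) = (2/π) arctan( ((ν+1)tan(πθ/2) + (ν-1)) / ((ν-1)tan(πθ/2) + (ν+1)) ) satisfies the composition law h_ν ∘ h_μ = h_{νμ} on the interval (-1/2, 1/2), for all ν, μ > 0. -/

import Mathlib

open Real

noncomputable def h (ν θ : ℝ) : ℝ :=
  (2 / π) * arctan (((ν + 1) * tan (π * θ / 2) + (ν - 1)) /
    ((ν - 1) * tan (π * θ / 2) + (ν + 1)))

lemma hcomp_denom_pos {ν t : ℝ} (hν : 0 < ν) (ht : t ∈ Set.Ioo (-1:ℝ) 1) :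
    0 < (ν - 1) * t + (ν + 1) := by
  obtain ⟨h1, h2⟩ := ht; nlinarith

lemma hcomp_g_mem {ν t : ℝ} (hν : 0 < ν) (ht : t ∈ Set.Ioo (-1:ℝ) 1) :
    ((ν + 1) * t + (ν - 1)) / ((ν - 1) * t + (ν + 1)) ∈ Set.Ioo (-1:ℝ) 1 := by
  have hd := hcomp_denom_pos hν ht
  obtain ⟨h1, h2⟩ := ht
  constructor
  · rw [lt_div_iff₀ hd]; nlinarith
  · rw [div_lt_one hd]; nlinarith

theorem h_comp (ν μ : ℝ) (hν : 0 < ν) (hμ : 0 < μ)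
    (θ : ℝ) (hθ : θ ∈ Set.Ioo (-(1:ℝ)/2) (1/2)) :
    h ν (h μ θ) = h (ν * μ) θ := by
  have hπ : (0:ℝ) < π := Real.pi_pos
  set t := tan (π * θ / 2) with ht_def
  have ht : t ∈ Set.Ioo (-1:ℝ) 1 := by
    obtain ⟨h1, h2⟩ := hθ
    have hm1 : -(π/4) ∈ Set.Ioo (-(π/2)) (π/2) := by constructor <;> linarith
    have hm2 : (π/4) ∈ Set.Ioo (-(π/2)) (π/2) := by constructor <;> linarith
    have hmθ : π * θ / 2 ∈ Set.Ioo (-(π/2)) (π/2) := by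
      constructor <;> nlinarith
    constructor
    · have := Real.strictMonoOn_tan hm1 hmθ (by nlinarith)
      rwa [Real.tan_neg, Real.tan_pi_div_four] at this
    · have := Real.strictMonoOn_tan hmθ hm2 (by nlinarith)
      rwa [Real.tan_pi_div_four] at this
  set g := ((μ + 1) * t + (μ - 1)) / ((μ - 1) * t + (μ + 1)) with hg_def
  have key : ∀ x : ℝ, tan (π * (2 / π * arctan x) / 2) = x := by
    intro x
    rw [show π * (2 / π * arctan x) / 2 = arctan x by field_simp, tan_arctan]
  have hgm : g ∈ Set.Ioo (-1:ℝ) 1 := hcomp_g_mem hμ ht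
  have hd1 : 0 < (μ - 1) * t + (μ + 1) := hcomp_denom_pos hμ ht
  have hd2 : 0 < (ν - 1) * g + (ν + 1) := hcomp_denom_pos hν hgm
  have hd3 : 0 < (ν * μ - 1) * t + (ν * μ + 1) :=
    hcomp_denom_pos (mul_pos hν hμ) ht
  rw [hg_def] at hd2
  simp only [h, ← ht_def, key]
  congr 1
  congr 1
  rw [div_eq_div_iff (ne_of_gt hd2) (ne_of_gt hd3)]
  have e : t * (μ - 1) + (μ + 1) ≠ 0 := by nlinarith
  field_simp
  ring
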